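/- Let q ≥ 1 be an integer and A ∈ SL(2,ℂ) with A ≠ I and A ≠ −I. If A^q = I or A^q = −I, then there exists a unique integer k with 1 ≤ k ≤ q−1 such that e^{ikπ/q} is an eigenvalue of A; moreover for this k one has tr A = 2cos(kπ/q) and A^q = (−1)^k·I. -/

import Mathlib

open Complex

/-- `μ` is an eigenvalue of the matrix `A`. -/
def Matrix.IsEigenvalue (A : Matrix (Fin 2) (Fin 2) ℂ) (μ : ℂ) : Prop :=
  ∃ v : Fin 2 → ℂ, v ≠ 0 ∧ A.mulVec v = μ • v

lemma det_sub_smul' (M : Matrix (Fin 2) (Fin 2) ℂ) (x : ℂ) :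
    (M - x • 1).det = x ^ 2 - M.trace * x + M.det := by
  simp [Matrix.det_fin_two, Matrix.trace_fin_two, Matrix.one_apply]
  ring

lemma eig_iff' (M : Matrix (Fin 2) (Fin 2) ℂ) (μ : ℂ) :
    M.IsEigenvalue μ ↔ μ ^ 2 - M.trace * μ + M.det = 0 := by
  rw [← det_sub_smul', ← Matrix.exists_mulVec_eq_zero_iff]
  constructor
  · rintro ⟨v, hv, h⟩
    exact ⟨v, hv, by simp [Matrix.sub_mulVec, Matrix.smul_mulVec, h]⟩
  · rintro ⟨v, hv, h⟩
    refine ⟨v, hv, ?_⟩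
    rw [Matrix.sub_mulVec, Matrix.smul_mulVec, Matrix.one_mulVec, sub_eq_zero] at h
    exact h

lemma CH2' (M : Matrix (Fin 2) (Fin 2) ℂ) : M * M = M.trace • M - M.det • 1 := by
  ext i j
  fin_cases i <;> fin_cases j <;>
    simp [Matrix.mul_apply, Matrix.trace_fin_two, Matrix.det_fin_two, Fin.sum_univ_succ,
      Matrix.one_apply] <;> ring

lemma unip_pow' (N : Matrix (Fin 2) (Fin 2) ℂ) (hN : N * N = 0) (n : ℕ) :
    (1 + N) ^ n = 1 + (n : ℂ) • N := by
  induction n with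
  | zero => simp
  | succ n ih =>
    rw [pow_succ, ih, add_mul, mul_add, mul_add]
    simp only [Matrix.smul_mul, Matrix.one_mul, Matrix.mul_one, hN, smul_zero]
    push_cast
    rw [add_smul, one_smul]
    abel

lemma pow_mulVec' (M : Matrix (Fin 2) (Fin 2) ℂ) (μ : ℂ) (v : Fin 2 → ℂ)
    (h : M.mulVec v = μ • v) (n : ℕ) : (M ^ n).mulVec v = μ ^ n • v := by
  induction n with
  | zero => simp [Matrix.one_mulVec]
  | succ n ih =>
    rw [pow_succ, ← Matrix.mulVec_mulVec, h, Matrix.mulVec_smul, ih, smul_smul, ← pow_succ']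

lemma smul_vec_cancel' {v : Fin 2 → ℂ} (hv : v ≠ 0) {a b : ℂ} (h : a • v = b • v) : a = b := by
  by_contra hne
  apply hv
  have h2 : (a - b) • v = 0 := by rw [sub_smul, h, sub_self]
  rcases smul_eq_zero.mp h2 with h3 | h3
  · exact absurd (sub_eq_zero.mp h3) hne
  · exact absurd h3 hv

lemma exp_piq_int' {q : ℕ} (hq : 1 ≤ q) (c : ℤ)
    (h : Complex.exp ((c : ℂ) * Real.pi * Complex.I / q) = 1) : ∃ n : ℤ, c = 2 * n * q := by
  rw [Complex.exp_eq_one_iff] at h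
  obtain ⟨n, hn⟩ := h
  have hqc : (q : ℂ) ≠ 0 := Nat.cast_ne_zero.2 (by omega)
  have hπI : (Real.pi : ℂ) * I ≠ 0 :=
    mul_ne_zero (ofReal_ne_zero.2 Real.pi_ne_zero) I_ne_zero
  refine ⟨n, ?_⟩
  have h4 : (c : ℂ) * (Real.pi * I) = (2 * n * q) * (Real.pi * I) := by
    field_simp at hn
    linear_combination (↑Real.pi * I) * hn
  have h6 := mul_right_cancel₀ hπI h4
  exact_mod_cast h6

lemma int_bound_zero' {q : ℕ} (hq : 1 ≤ q) {c n : ℤ} (hb1 : -(2 * (q : ℤ)) < c)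
    (hb2 : c < 2 * q) (heq : c = 2 * n * q) : c = 0 := by
  have hqz : (1 : ℤ) ≤ (q : ℤ) := by exact_mod_cast hq
  rcases lt_trichotomy n 0 with h | h | h
  · exfalso
    have h2 : n * (q : ℤ) ≤ -1 * q := mul_le_mul_of_nonneg_right (by omega) (by omega)
    linarith
  · simp [heq, h]
  · exfalso
    have h2 : 1 * (q : ℤ) ≤ n * q := mul_le_mul_of_nonneg_right (by omega) (by omega)
    linarith

/-- If `A ∈ SL(2,ℂ)`, `A ≠ ±I`, and `A^q = ±I` for some `q ≥ 1`, then there is a unique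
integer `k` with `1 ≤ k ≤ q - 1` such that `e^{ikπ/q}` is an eigenvalue of `A`; moreover
for this `k` one has `tr A = 2 cos(kπ/q)` and `A^q = (-1)^k · I`. -/
theorem stmt_3 (q : ℕ) (hq : 1 ≤ q) (A : Matrix.SpecialLinearGroup (Fin 2) ℂ)
    (hA1 : (A : Matrix (Fin 2) (Fin 2) ℂ) ≠ 1)
    (hA2 : (A : Matrix (Fin 2) (Fin 2) ℂ) ≠ -1)
    (hAq : ((A ^ q : Matrix.SpecialLinearGroup (Fin 2) ℂ) : Matrix (Fin 2) (Fin 2) ℂ) = 1 ∨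
           ((A ^ q : Matrix.SpecialLinearGroup (Fin 2) ℂ) : Matrix (Fin 2) (Fin 2) ℂ) = -1) :
    (∃! k : ℕ, 1 ≤ k ∧ k ≤ q - 1 ∧
        Matrix.IsEigenvalue A.1 (Complex.exp ((k : ℂ) * Real.pi * Complex.I / q))) ∧
    (∀ k : ℕ, 1 ≤ k → k ≤ q - 1 →
        Matrix.IsEigenvalue A.1 (Complex.exp ((k : ℂ) * Real.pi * Complex.I / q)) →
        Matrix.trace A.1 = 2 * Complex.cos ((k : ℂ) * Real.pi / q) ∧
        ((A ^ q : Matrix.SpecialLinearGroup (Fin 2) ℂ) : Matrix (Fin 2) (Fin 2) ℂ) =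
          (-1 : ℂ) ^ k • 1) := by
  have hdet : (A.1).det = 1 := A.2
  set t : ℂ := (A.1).trace with ht
  have hqc : (q : ℂ) ≠ 0 := Nat.cast_ne_zero.2 (by omega)
  -- eigenvalue criterion
  have eigfact : ∀ μ : ℂ, A.1.IsEigenvalue μ ↔ μ ^ 2 - t * μ + 1 = 0 := by
    intro μ; rw [eig_iff', hdet, ht]
  -- ε' : the sign of A^q
  obtain ⟨ε', hε'1, hε'2⟩ : ∃ e : ℂ, (e = 1 ∨ e = -1) ∧
      ((A ^ q : Matrix.SpecialLinearGroup (Fin 2) ℂ) : Matrix (Fin 2) (Fin 2) ℂ) = e • 1 := by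
    rcases hAq with h | h
    · exact ⟨1, Or.inl rfl, by simp [h]⟩
    · exact ⟨-1, Or.inr rfl, by simp [h]⟩
  -- any eigenvalue λ satisfies λ^q = ε'
  have key : ∀ lam : ℂ, A.1.IsEigenvalue lam → lam ^ q = ε' := by
    rintro lam ⟨v, hv, h⟩
    have h2 := pow_mulVec' A.1 lam v h q
    rw [← Matrix.SpecialLinearGroup.coe_pow, hε'2, Matrix.smul_mulVec,
      Matrix.one_mulVec] at h2
    exact (smul_vec_cancel' hv h2).symm
  -- there exists an eigenvalue
  obtain ⟨s, hs⟩ := IsAlgClosed.exists_pow_nat_eq (k := ℂ) (t ^ 2 - 4) (n := 2) (by norm_num)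
  set μ : ℂ := (t + s) / 2 with hμdef
  have hμ : μ ^ 2 - t * μ + 1 = 0 := by
    rw [hμdef]; field_simp; linear_combination hs
  have hμeig : A.1.IsEigenvalue μ := (eigfact μ).2 hμ
  -- μ ≠ ±1
  have hμpm : ∀ ε : ℂ, ε = 1 ∨ ε = -1 → μ ≠ ε := by
    intro ε hε hcon
    have hε2 : ε * ε = 1 := by rcases hε with h | h <;> simp [h]
    have hε0 : ε ≠ 0 := by rcases hε with h | h <;> simp [h]
    -- t = 2ε
    have htε : t = 2 * ε := by
      rw [hcon] at hμ
      have hεsq : ε ^ 2 = 1 := by rw [sq]; exact hε2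
      rw [hεsq] at hμ
      linear_combination (-ε) * hμ - t * hε2
    -- N := A - ε•1 is square-zero
    set N : Matrix (Fin 2) (Fin 2) ℂ := A.1 - ε • 1 with hN
    have hch := CH2' A.1
    rw [hdet, ← ht, one_smul, htε] at hch
    have hNN : N * N = 0 := by
      rw [hN]
      rw [sub_mul, mul_sub, mul_sub, hch]
      simp only [Matrix.smul_mul, Matrix.mul_smul, Matrix.one_mul, Matrix.mul_one, smul_smul]
      match_scalars
      · ring
      · linear_combination hε2
    -- ε • A = 1 + ε • N
    have hεA : ε • A.1 = 1 + ε • N := by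
      rw [hN, smul_sub, smul_smul, hε2, one_smul]
      abel
    have hεNsq : (ε • N) * (ε • N) = 0 := by
      rw [Matrix.smul_mul, Matrix.mul_smul, hNN, smul_zero, smul_zero]
    have hpow := unip_pow' (ε • N) hεNsq q
    rw [← hεA, smul_pow] at hpow
    have hAq' : (A.1) ^ q = ε' • 1 := by
      rw [← Matrix.SpecialLinearGroup.coe_pow, hε'2]
    rw [hAq'] at hpow
    -- so (q * ε) • N = (ε^q * ε' - 1) • 1
    have hkey : ((q : ℂ) * ε) • N = (ε ^ q * ε' - 1) • 1 := by
      have h2 : (q : ℂ) • (ε • N) = ε ^ q • (ε' • 1) - 1 := by rw [hpow]; abel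
      rw [smul_smul] at h2
      rw [h2, smul_smul, sub_smul, one_smul]
    -- square both sides
    have hsq : (((q : ℂ) * ε) • N) * (((q : ℂ) * ε) • N) = ((ε ^ q * ε' - 1) ^ 2) • 1 := by
      rw [hkey, Matrix.smul_mul, Matrix.mul_smul, Matrix.one_mul, smul_smul, sq]
    rw [Matrix.smul_mul, Matrix.mul_smul, hNN, smul_zero, smul_zero] at hsq
    have hsc : (ε ^ q * ε' - 1) ^ 2 = 0 := by
      have h3 := congrFun (congrFun hsq.symm 0) 0
      simpa [Matrix.one_apply] using h3
    have hc1 : ε ^ q * ε' - 1 = 0 := pow_eq_zero_iff (n := 2) (by norm_num) |>.mp hsc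
    rw [hc1, zero_smul] at hkey
    have hqε : (q : ℂ) * ε ≠ 0 := mul_ne_zero hqc hε0
    have hN0 : N = 0 := by
      rcases smul_eq_zero.mp hkey with h | h
      · exact absurd h hqε
      · exact h
    have hAε : A.1 = ε • 1 := by
      rw [hN] at hN0
      rwa [sub_eq_zero] at hN0
    rcases hε with h | h
    · rw [h, one_smul] at hAε; exact hA1 hAε
    · rw [h] at hAε; simp at hAε; exact hA2 hAε
  -- μ is a 2q-th root of unity
  have hμq := key μ hμeig
  have hμ2q : μ ^ (2 * q) = 1 := by
    rw [mul_comm, pow_mul, hμq]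
    rcases hε'1 with h | h <;> simp [h]
  haveI : NeZero (2 * q) := ⟨by omega⟩
  obtain ⟨m, hm, hmeq⟩ :=
    (Complex.isPrimitiveRoot_exp (2 * q) (by omega)).eq_pow_of_pow_eq_one hμ2q
  -- exp(mπI/q) = μ
  have hmexp : Complex.exp ((m : ℂ) * Real.pi * Complex.I / q) = μ := by
    rw [← hmeq, ← Complex.exp_nat_mul]
    congr 1
    push_cast
    field_simp
  set e : ℕ → ℂ := fun k => Complex.exp ((k : ℂ) * Real.pi * Complex.I / q) with he
  have hene : ∀ k, e k ≠ 0 := fun k => Complex.exp_ne_zero _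
  have heq_exp : ∀ a b : ℕ, e a * e b =
      Complex.exp (((a : ℂ) + b) * Real.pi * Complex.I / q) := by
    intro a b
    simp only [he, ← Complex.exp_add]
    congr 1
    field_simp
  have hm0 : m ≠ 0 := by
    intro h0
    rw [h0] at hmexp
    simp at hmexp
    exact hμpm 1 (Or.inl rfl) hmexp.symm
  have hmq : m ≠ q := by
    intro h0
    rw [h0] at hmexp
    rw [show (q : ℂ) * Real.pi * Complex.I / q = Real.pi * Complex.I by field_simp,
      Complex.exp_pi_mul_I] at hmexp
    exact hμpm (-1) (Or.inr rfl) hmexp.symm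
  -- the chosen k
  set k : ℕ := if m < q then m else 2 * q - m with hk
  have hk1 : 1 ≤ k := by rw [hk]; split <;> omega
  have hk2 : k ≤ q - 1 := by rw [hk]; split <;> omega
  -- e k is an eigenvalue
  have hkeig : A.1.IsEigenvalue (e k) := by
    rw [hk]
    split
    · next hlt =>
      have h1 : e m = μ := hmexp
      rw [h1]; exact hμeig
    · next hge =>
      have hprod : e (2 * q - m) * μ = 1 := by
        rw [← hmexp]
        have h1 : e m = Complex.exp ((m : ℂ) * Real.pi * Complex.I / q) := rfl
        rw [← h1, heq_exp]
        rw [show ((2 * q - m : ℕ) : ℂ) + (m : ℂ) = ((2 * q : ℕ) : ℂ) by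
          rw [← Nat.cast_add]; congr 1; omega]
        rw [show ((2 * q : ℕ) : ℂ) * Real.pi * Complex.I / q = 2 * Real.pi * Complex.I by
          push_cast; field_simp]
        exact Complex.exp_two_pi_mul_I
      rw [eigfact]
      have hq1 := (eigfact μ).1 hμeig
      linear_combination (e (2 * q - m)) ^ 2 * hq1 +
        (t * e (2 * q - m) - μ * e (2 * q - m) - 1) * hprod
  -- quadratic has at most these two roots
  have quad_cases : ∀ a b : ℂ, a ^ 2 - t * a + 1 = 0 → b ^ 2 - t * b + 1 = 0 →
      a = b ∨ a * b = 1 := by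
    intro a b ha hb
    have hfac : (a - b) * (a + b - t) = 0 := by linear_combination ha - hb
    rcases mul_eq_zero.mp hfac with h | h
    · exact Or.inl (sub_eq_zero.mp h)
    · exact Or.inr (by linear_combination (-1 : ℂ) * ha + a * h)
  -- injectivity on indices
  have ekinj : ∀ k1 k2 : ℕ, 1 ≤ k1 → k1 ≤ q - 1 → 1 ≤ k2 → k2 ≤ q - 1 →
      e k1 = e k2 → k1 = k2 := by
    intro k1 k2 h11 h12 h21 h22 heq
    have hdiv : Complex.exp ((((k1 : ℤ) - k2 : ℤ) : ℂ) * Real.pi * Complex.I / q) = 1 := by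
      rw [show ((((k1 : ℤ) - k2 : ℤ)) : ℂ) * Real.pi * Complex.I / q =
        (k1 : ℂ) * Real.pi * Complex.I / q - (k2 : ℂ) * Real.pi * Complex.I / q by
          push_cast; ring]
      rw [Complex.exp_sub]
      have : e k1 / e k2 = 1 := by rw [heq, div_self (hene k2)]
      exact this
    obtain ⟨n, hn⟩ := exp_piq_int' hq _ hdiv
    have hc0 : (k1 : ℤ) - k2 = 0 := int_bound_zero' hq (by omega) (by omega) hn
    omega
  have ekprod : ∀ k1 k2 : ℕ, 1 ≤ k1 → k1 ≤ q - 1 → 1 ≤ k2 → k2 ≤ q - 1 →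
      e k1 * e k2 = 1 → False := by
    intro k1 k2 h11 h12 h21 h22 hpr
    rw [heq_exp] at hpr
    have hpr2 : Complex.exp ((((k1 : ℤ) + k2 : ℤ) : ℂ) * Real.pi * Complex.I / q) = 1 := by
      rw [show ((((k1 : ℤ) + k2 : ℤ)) : ℂ) = (k1 : ℂ) + k2 by push_cast; ring]
      exact hpr
    obtain ⟨n, hn⟩ := exp_piq_int' hq _ hpr2
    have hc0 : (k1 : ℤ) + k2 = 0 := int_bound_zero' hq (by omega) (by omega) hn
    omega
  constructor
  · -- unique existence
    refine ⟨k, ⟨hk1, hk2, hkeig⟩, ?_⟩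
    rintro k' ⟨h1, h2, h3⟩
    have ha := (eigfact (e k')).1 h3
    have hb := (eigfact (e k)).1 hkeig
    rcases quad_cases (e k') (e k) ha hb with h | h
    · exact ekinj k' k h1 h2 hk1 hk2 h
    · exact (ekprod k' k h1 h2 hk1 hk2 h).elim
  · -- the moreover part
    intro k' h1 h2 h3
    have ha := (eigfact (e k')).1 h3
    constructor
    · -- trace formula
      have hcos : 2 * Complex.cos ((k' : ℂ) * Real.pi / q) = e k' + (e k')⁻¹ := by
        rw [Complex.two_cos, show e k' = Complex.exp ((k' : ℂ) * Real.pi * Complex.I / q)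
          from rfl, ← Complex.exp_neg]
        congr 1 <;> congr 1 <;> ring
      rw [hcos]
      have he0 : e k' ≠ 0 := hene k'
      field_simp
      linear_combination (-1 : ℂ) * ha
    · -- A^q = (-1)^k • 1
      have hlq := key (e k') h3
      have hpw : (e k') ^ q = (-1 : ℂ) ^ k' := by
        simp only [he]
        rw [← Complex.exp_nat_mul,
          show (q : ℂ) * ((k' : ℂ) * Real.pi * Complex.I / q) =
            (k' : ℂ) * (Real.pi * Complex.I) by field_simp,
          Complex.exp_nat_mul, Complex.exp_pi_mul_I]
      rw [hε'2, ← hlq, hpw]
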